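/- Let p > 1, a > 0, C > 0, ε > 0, R_0 > 0, and T > 2R_0. Suppose W : [2R_0, T] → [0,∞) is differentiable and nondecreasing, and that R^{a−1} ≤ C W'(R) (ε + W(R))^{−p} for all R ∈ [2R_0, T]. Then T^a ≤ (2R_0)^a + (aC/(p−1)) ε^{−(p−1)}. -/

import Mathlib

open Set

/-- ODE lemma yielding the subcritical upper lifespan bound. -/
theorem statement12 (p a C ε R₀ T : ℝ) (hp : 1 < p) (ha : 0 < a) (hC : 0 < C)
    (hε : 0 < ε) (hR₀ : 0 < R₀) (hT : 2 * R₀ < T)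
    (W W' : ℝ → ℝ)
    (hWnonneg : ∀ R ∈ Set.Icc (2 * R₀) T, 0 ≤ W R)
    (hWderiv : ∀ R ∈ Set.Icc (2 * R₀) T, HasDerivWithinAt W (W' R) (Set.Icc (2 * R₀) T) R)
    (hWmono : MonotoneOn W (Set.Icc (2 * R₀) T))
    (hineq : ∀ R ∈ Set.Icc (2 * R₀) T, R ^ (a - 1) ≤ C * W' R * (ε + W R) ^ (-p)) :
    T ^ a ≤ (2 * R₀) ^ a + a * C / (p - 1) * ε ^ (-(p - 1)) := by
  have hp1 : 0 < p - 1 := by linarith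
  have h2R₀ : 0 < 2 * R₀ := by linarith
  set s : Set ℝ := Set.Icc (2 * R₀) T with hs
  have hTmem : T ∈ s := ⟨hT.le, le_rfl⟩
  have hLmem : (2 * R₀) ∈ s := ⟨le_rfl, hT.le⟩
  set K : ℝ := a * C / (p - 1) with hK
  have hKpos : 0 < K := by positivity
  set F : ℝ → ℝ := fun R => R ^ a + K * (ε + W R) ^ (1 - p) with hF
  -- derivative facts
  have hεW : ∀ R ∈ s, 0 < ε + W R := fun R hR => by
    have := hWnonneg R hR; linarith
  have hFd : ∀ R ∈ s, HasDerivWithinAt F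
      (a * R ^ (a - 1) + K * (W' R * (1 - p) * (ε + W R) ^ (1 - p - 1))) s R := by
    intro R hR
    have hRpos : 0 < R := lt_of_lt_of_le h2R₀ hR.1
    have h1 : HasDerivWithinAt (fun x : ℝ => x ^ a) (a * R ^ (a - 1)) s R :=
      (Real.hasDerivAt_rpow_const (Or.inl hRpos.ne')).hasDerivWithinAt
    have h2 : HasDerivWithinAt (fun x => ε + W x) (W' R) s R := by
      have := (hasDerivWithinAt_const R s ε).add (hWderiv R hR)
      rw [zero_add] at this
      exact this
    have h3 : HasDerivWithinAt (fun x => (ε + W x) ^ (1 - p))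
        (W' R * (1 - p) * (ε + W R) ^ (1 - p - 1)) s R :=
      h2.rpow_const (Or.inl (hεW R hR).ne')
    exact h1.add (h3.const_mul K)
  have hFanti : AntitoneOn F s := by
    apply antitoneOn_of_deriv_nonpos (convex_Icc _ _)
    · exact fun R hR => (hFd R hR).continuousWithinAt
    · intro R hR
      rw [interior_Icc] at hR
      exact ((hFd R (Ioo_subset_Icc_self hR)).hasDerivAt
        (Icc_mem_nhds hR.1 hR.2)).differentiableAt.differentiableWithinAt
    · intro R hR
      rw [interior_Icc] at hR
      have hRs : R ∈ s := Ioo_subset_Icc_self hR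
      rw [((hFd R hRs).hasDerivAt (Icc_mem_nhds hR.1 hR.2)).deriv]
      have hkey := hineq R hRs
      have hexp : (1 : ℝ) - p - 1 = -p := by ring
      rw [hexp]
      have : K * (W' R * (1 - p) * (ε + W R) ^ (-p))
          = -a * (C * W' R * (ε + W R) ^ (-p)) := by
        rw [hK, div_mul_eq_mul_div, div_eq_iff hp1.ne']
        ring
      rw [this]
      nlinarith [hkey, ha]
  have hFT : F T ≤ F (2 * R₀) := hFanti hLmem hTmem hT.le
  have h1 : 0 ≤ K * (ε + W T) ^ (1 - p) :=
    le_of_lt (mul_pos hKpos (Real.rpow_pos_of_pos (hεW T hTmem) _))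
  have h2 : (ε + W (2 * R₀)) ^ (1 - p) ≤ ε ^ (-(p - 1)) := by
    have : (1 : ℝ) - p = -(p - 1) := by ring
    rw [this]
    exact Real.rpow_le_rpow_of_nonpos hε
      (by have := hWnonneg _ hLmem; linarith) (by linarith)
  have := calc T ^ a ≤ F T := by simpa [hF] using h1
    _ ≤ F (2 * R₀) := hFT
    _ ≤ (2 * R₀) ^ a + K * ε ^ (-(p - 1)) := by
        have := mul_le_mul_of_nonneg_left h2 hKpos.le
        simp only [hF]; linarith
  simpa [hK] using this
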